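/- For every positive integer k and all real numbers a, b ≥ 0, one has ∑_{j=0}^{k} C(k,j)² · a^{(2k−1)(k−j)/k} · b^{(2k−1)j/k} ≥ C(2k,k) · 2^{1−2k} · (a+b)^{2k−1}, with 0^0 interpreted as 1. Equivalently, the Whiteley mean 𝔐₂^{[k,k]}(x,y) := ((∑_{j=0}^{k} C(k,j)² x^{k−j} y^{j}) / C(2k,k))^{1/k} dominates the power mean with exponent k/(2k−1): 𝔐₂^{[k,k]}(x,y) ≥ ((x^{k/(2k−1)} + y^{k/(2k−1)})/2)^{(2k−1)/k} for all x, y ≥ 0. -/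

import Mathlib

open Finset Set Filter

noncomputable def wlbN (k : ℕ) (s : ℝ) : ℝ := ∑ j ∈ range (k+1), (k.choose j : ℝ)^2 * s^j

noncomputable def wlbN1 (k : ℕ) (s : ℝ) : ℝ :=
  ∑ j ∈ range (k+1), (k.choose j : ℝ)^2 * ((j : ℝ) * s^(j-1))

noncomputable def wlbN2 (k : ℕ) (s : ℝ) : ℝ :=
  ∑ j ∈ range (k+1), (k.choose j : ℝ)^2 * ((j : ℝ) * (((j-1 : ℕ) : ℝ) * s^(j-1-1)))

lemma hasDerivAt_wlbN (k : ℕ) (s : ℝ) : HasDerivAt (wlbN k) (wlbN1 k s) s := by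
  unfold wlbN wlbN1
  exact HasDerivAt.fun_sum fun j _ => (hasDerivAt_pow j s).const_mul _

lemma hasDerivAt_wlbN1 (k : ℕ) (s : ℝ) : HasDerivAt (wlbN1 k) (wlbN2 k s) s := by
  unfold wlbN1 wlbN2
  exact HasDerivAt.fun_sum fun j _ =>
    (((hasDerivAt_pow (j-1) s).const_mul (j:ℝ)).const_mul _)

lemma wlb_choose_sq (k j : ℕ) (hj : j < k) :
    ((k.choose (j+1) : ℝ))^2 * ((j:ℝ)+1)^2 = ((k.choose j : ℝ))^2 * ((k:ℝ)-(j:ℝ))^2 := by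
  have h := Nat.choose_succ_right_eq k j
  have h' : ((k.choose (j+1) : ℝ)) * ((j:ℝ)+1) = (k.choose j : ℝ) * ((k:ℝ)-(j:ℝ)) := by
    have := congrArg (fun n : ℕ => (n : ℝ)) h
    push_cast [Nat.cast_sub hj.le] at this
    linarith
  linear_combination ((k.choose (j+1) : ℝ) * ((j:ℝ)+1) + (k.choose j : ℝ) * ((k:ℝ)-(j:ℝ))) * h'

/-- the hypergeometric ODE:  s(1-s)N'' + (1+(2k-1)s)N' = k² N. -/
lemma wlbN_ode (k : ℕ) (s : ℝ) :
    s*(1-s) * wlbN2 k s + (1+(2*(k:ℝ)-1)*s) * wlbN1 k s = (k:ℝ)^2 * wlbN k s := by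
  unfold wlbN wlbN1 wlbN2
  rw [Finset.mul_sum, Finset.mul_sum, Finset.mul_sum, ← Finset.sum_add_distrib]
  have step1 : ∀ j ∈ range (k+1),
      s*(1-s) * ((k.choose j : ℝ)^2 * ((j : ℝ) * (((j-1 : ℕ) : ℝ) * s^(j-1-1))))
        + (1+(2*(k:ℝ)-1)*s) * ((k.choose j : ℝ)^2 * ((j : ℝ) * s^(j-1)))
      = (k.choose j : ℝ)^2 * ((j:ℝ)^2 * s^(j-1))
        + (k.choose j : ℝ)^2 * (((j:ℝ)*(2*(k:ℝ)-(j:ℝ))) * s^j) := by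
    intro j _
    match j with
    | 0 => simp
    | 1 => push_cast; norm_num; try ring
    | (m+2) =>
      have e1 : (m+2) - 1 - 1 = m := rfl
      have e2 : (m+2) - 1 = m + 1 := rfl
      rw [e1, e2]
      have e3 : s^(m+1) = s^m * s := pow_succ s m
      have e4 : s^(m+2) = s^m * s * s := by ring
      push_cast
      rw [e3, e4]
      ring
  rw [Finset.sum_congr rfl step1, Finset.sum_add_distrib]
  have reindex : ∑ j ∈ range (k+1), (k.choose j : ℝ)^2 * ((j:ℝ)^2 * s^(j-1))
      = ∑ j ∈ range (k+1), (k.choose j : ℝ)^2 * (((k:ℝ)-(j:ℝ))^2 * s^j) := by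
    rw [Finset.sum_range_succ' (fun j => (k.choose j : ℝ)^2 * ((j:ℝ)^2 * s^(j-1))) k,
        Finset.sum_range_succ (fun j => (k.choose j : ℝ)^2 * (((k:ℝ)-(j:ℝ))^2 * s^j)) k]
    have h0 : ((k.choose 0 : ℝ))^2 * (((0:ℕ):ℝ)^2 * s^(0-1)) = 0 := by norm_num
    have hk : ((k.choose k : ℝ))^2 * (((k:ℝ)-((k:ℕ):ℝ))^2 * s^k) = 0 := by
      simp
    rw [h0, hk, add_zero, add_zero]
    refine Finset.sum_congr rfl fun j hj => ?_
    have hjk := Finset.mem_range.mp hj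
    simp only [Nat.add_sub_cancel]
    push_cast
    linear_combination (s^j) * wlb_choose_sq k j hjk
  rw [reindex, ← Finset.sum_add_distrib]
  refine Finset.sum_congr rfl fun j hj => ?_
  ring

noncomputable def wlbq (k : ℕ) : ℝ := (k:ℝ)/(2*(k:ℝ)-1)

noncomputable def wlbpsi (k : ℕ) (s : ℝ) : ℝ :=
  s*(1+s^(wlbq k))*wlbN1 k s - (k:ℝ)*s^(wlbq k)*wlbN k s

noncomputable def wlbpsider (k : ℕ) (s : ℝ) : ℝ :=
  ((1*(1+s^(wlbq k)) + s*(wlbq k * s^(wlbq k - 1))) * wlbN1 k s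
      + s*(1+s^(wlbq k)) * wlbN2 k s)
    - (((k:ℝ)*(wlbq k * s^(wlbq k - 1))) * wlbN k s + ((k:ℝ)*s^(wlbq k)) * wlbN1 k s)

lemma hasDerivAt_wlbpsi (k : ℕ) {s : ℝ} (hs : 0 < s) :
    HasDerivAt (wlbpsi k) (wlbpsider k s) s := by
  have hrp : HasDerivAt (fun x : ℝ => x^(wlbq k)) (wlbq k * s^(wlbq k - 1)) s :=
    Real.hasDerivAt_rpow_const (Or.inl hs.ne')
  have h1 : HasDerivAt (fun x : ℝ => x*(1+x^(wlbq k)))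
      (1*(1+s^(wlbq k)) + s*(wlbq k * s^(wlbq k - 1))) s :=
    (hasDerivAt_id' s).mul (hrp.const_add 1)
  have h2 := h1.mul (hasDerivAt_wlbN1 k s)
  have h3 := (hrp.const_mul (k:ℝ)).mul (hasDerivAt_wlbN k s)
  exact h2.sub h3

lemma wlbN_ge_one (k : ℕ) {s : ℝ} (hs : 0 ≤ s) : 1 ≤ wlbN k s := by
  unfold wlbN
  have h0 : (0:ℕ) ∈ range (k+1) := by simp
  calc (1:ℝ) = (k.choose 0 : ℝ)^2 * s^0 := by simp
    _ ≤ _ := Finset.single_le_sum (f := fun j => (k.choose j : ℝ)^2 * s^j)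
        (fun j _ => by positivity) h0

lemma wlbN_pos (k : ℕ) {s : ℝ} (hs : 0 ≤ s) : 0 < wlbN k s :=
  lt_of_lt_of_le one_pos (wlbN_ge_one k hs)

lemma wlbN1_nonneg (k : ℕ) {s : ℝ} (hs : 0 ≤ s) : 0 ≤ wlbN1 k s := by
  unfold wlbN1
  exact Finset.sum_nonneg fun j _ => by positivity

lemma wlbN1_le_one (k : ℕ) {s : ℝ} (hs0 : 0 ≤ s) (hs1 : s ≤ 1) :
    wlbN1 k s ≤ wlbN1 k 1 := by
  unfold wlbN1
  refine Finset.sum_le_sum fun j _ => ?_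
  have h : s^(j-1) ≤ 1 := pow_le_one₀ hs0 hs1
  have h1 : (1:ℝ)^(j-1) = 1 := one_pow _
  rw [h1]
  have := mul_le_mul_of_nonneg_left h (by positivity : (0:ℝ) ≤ (j:ℝ))
  nlinarith [sq_nonneg (k.choose j : ℝ)]

lemma wlbN1_one_pos (k : ℕ) (hk : 1 ≤ k) : 0 < wlbN1 k 1 := by
  unfold wlbN1
  refine Finset.sum_pos' (fun j _ => by positivity) ⟨1, by simp [Nat.lt_succ_of_le hk], ?_⟩
  have hkR : (0:ℝ) < (k:ℝ) := by exact_mod_cast hk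
  simp [Nat.choose_one_right]
  positivity

lemma wlb_pow_amgm {u : ℝ} (hu : 0 < u) (a d : ℕ) : 2*u^(a+d) ≤ u^a + u^(a+2*d) := by
  have key : u^a*(1-u^d)^2 = u^a - 2*u^(a+d) + u^(a+2*d) := by
    rw [pow_add, pow_add, two_mul d, pow_add]
    ring
  nlinarith [mul_nonneg (pow_pos hu a).le (sq_nonneg (1 - u^d))]

lemma wlb_sum_amgm (k : ℕ) (hk : 2 ≤ k) {u : ℝ} (hu0 : 0 < u) (hu1 : u < 1) :
    ((2*k-1 : ℕ) : ℝ) * u^(2*k-1) < ∑ i ∈ range (2*k-1), u^(k+i) := by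
  obtain ⟨n, hn⟩ : ∃ n, 2*k-1 = n := ⟨_, rfl⟩
  rw [hn]
  have hpair : ∀ i ∈ range n, 2*u^n ≤ u^(k+i) + u^(k+(n-1-i)) := by
    intro i hi
    have hi' := Finset.mem_range.mp hi
    rcases le_or_gt i (k-1) with h | h
    · have := wlb_pow_amgm hu0 (k+i) ((k-1)-i)
      rw [show k+i+((k-1)-i) = n by omega, show k+i+2*((k-1)-i) = k+(n-1-i) by omega] at this
      exact this
    · have := wlb_pow_amgm hu0 (k+(n-1-i)) (i+1-k)
      rw [show k+(n-1-i)+(i+1-k) = n by omega,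
          show k+(n-1-i)+2*(i+1-k) = k+i by omega] at this
      linarith
  have hk1 : u^(k-1) < 1 := pow_lt_one₀ hu0.le hu1 (by omega)
  have hsq : 0 < (1 - u^(k-1))^2 := by nlinarith
  have key : u^k*(1-u^(k-1))^2 = u^k + u^(k+2*(k-1)) - 2*u^(k+(k-1)) := by
    rw [pow_add u k (2*(k-1)), two_mul (k-1), pow_add u (k-1) (k-1), pow_add u k (k-1)]
    ring
  have hstrict : 2*u^n < u^(k+0) + u^(k+(n-1-0)) := by
    rw [show k+0 = k by omega, show k+(n-1-0) = k+2*(k-1) by omega,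
        show n = k+(k-1) by omega]
    nlinarith [mul_pos (pow_pos hu0 k) hsq]
  have hsum : ∑ _i ∈ range n, (2*u^n) < ∑ i ∈ range n, (u^(k+i) + u^(k+(n-1-i))) :=
    Finset.sum_lt_sum hpair ⟨0, Finset.mem_range.mpr (by omega), hstrict⟩
  have hrefl : ∑ i ∈ range n, u^(k+(n-1-i)) = ∑ i ∈ range n, u^(k+i) :=
    Finset.sum_range_reflect (fun i => u^(k+i)) n
  rw [Finset.sum_add_distrib, hrefl, Finset.sum_const, Finset.card_range, nsmul_eq_mul] at hsum
  linarith

lemma wlb_cross (k : ℕ) (hk : 2 ≤ k) {s : ℝ} (hs0 : 0 < s) (hs1 : s < 1)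
    (hc : wlbpsi k s = 0) : wlbpsider k s < 0 := by
  have hkR : (2:ℝ) ≤ (k:ℝ) := by exact_mod_cast hk
  have hnr : (0:ℝ) < 2*(k:ℝ)-1 := by linarith
  set t : ℝ := s^(wlbq k) with ht
  set x : ℝ := s^(wlbq k - 1) with hxdef
  have hq : wlbq k = (k:ℝ)/(2*(k:ℝ)-1) := rfl
  have hqpos : 0 < wlbq k := by rw [hq]; positivity
  have htpos : 0 < t := Real.rpow_pos_of_pos hs0 _
  have ht1 : t < 1 := Real.rpow_lt_one hs0.le hs1 hqpos
  set u : ℝ := s^((2*(k:ℝ)-1)⁻¹) with hu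
  have hu0 : 0 < u := Real.rpow_pos_of_pos hs0 _
  have hu1 : u < 1 := Real.rpow_lt_one hs0.le hs1 (by positivity)
  have hupow : ∀ m : ℕ, u^m = s^((m:ℝ) * (2*(k:ℝ)-1)⁻¹) := by
    intro m
    rw [hu, ← Real.rpow_natCast (s^((2*(k:ℝ)-1)⁻¹)) m, ← Real.rpow_mul hs0.le, mul_comm]
  have hun : u^(2*k-1) = s := by
    rw [hupow]
    have hcast : ((2*k-1 : ℕ) : ℝ) = 2*(k:ℝ)-1 := by
      push_cast [Nat.cast_sub (by omega : 1 ≤ 2*k)]; ring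
    rw [hcast, mul_inv_cancel₀ hnr.ne', Real.rpow_one]
  have huk : u^k = t := by
    rw [hupow, ht, hq]
    congr 1
  -- key inequality
  have hG2 : (2*(k:ℝ)-1)*(s - t^2) - t*(1-s) < 0 := by
    have hsum := wlb_sum_amgm k hk hu0 hu1
    have hmul := mul_lt_mul_of_pos_right hsum (by linarith : (0:ℝ) < 1 - u)
    have hgeom : (∑ i ∈ range (2*k-1), u^i) * (1-u) = 1 - u^(2*k-1) := by
      have := geom_sum_mul u (2*k-1)
      linarith
    have hsplit : ∑ i ∈ range (2*k-1), u^(k+i) = u^k * ∑ i ∈ range (2*k-1), u^i := by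
      rw [Finset.mul_sum]
      exact Finset.sum_congr rfl fun i _ => by rw [pow_add]
    rw [hsplit] at hmul
    have hR : u^k * (∑ i ∈ range (2*k-1), u^i) * (1-u) = t * (1-s) := by
      rw [mul_assoc, hgeom, hun, huk]
    rw [hR] at hmul
    have hL : ((2*k-1:ℕ):ℝ) * u^(2*k-1) * (1-u) = (2*(k:ℝ)-1) * (s - t^2) := by
      have hcast : ((2*k-1 : ℕ) : ℝ) = 2*(k:ℝ)-1 := by
        push_cast [Nat.cast_sub (by omega : 1 ≤ 2*k)]; ring
      have e1 : u^(2*k-1) * u = u^(2*k) := by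
        rw [← pow_succ]
        congr 1
        omega
      have e2 : u^(2*k) = t^2 := by rw [show 2*k = k*2 by ring, pow_mul, huk]
      calc ((2*k-1:ℕ):ℝ) * u^(2*k-1) * (1-u)
          = (2*(k:ℝ)-1) * (u^(2*k-1) - u^(2*k-1)*u) := by rw [hcast]; ring
        _ = (2*(k:ℝ)-1) * (s - t^2) := by rw [e1, e2, hun]
    rw [hL] at hmul
    linarith
  -- hypotheses for the algebraic identity
  have hode := wlbN_ode k s
  have hc' : s*(1+t)*wlbN1 k s = (k:ℝ)*t*wlbN k s := by
    have e : wlbpsi k s = s*(1+t)*wlbN1 k s - (k:ℝ)*t*wlbN k s := rfl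
    rw [e] at hc
    linarith
  have hx : x * s = t := by
    rw [hxdef, ht]
    have : s^(wlbq k - 1) * s^(1:ℝ) = s^(wlbq k - 1 + 1) := (Real.rpow_add hs0 _ _).symm
    rw [Real.rpow_one] at this
    rw [this]
    norm_num
  have hQ : (2*(k:ℝ)-1) * wlbq k = (k:ℝ) := by
    rw [hq]
    field_simp
  have hpd : wlbpsider k s
      = ((1*(1+t) + s*(wlbq k * x)) * wlbN1 k s + s*(1+t) * wlbN2 k s)
        - (((k:ℝ)*(wlbq k * x)) * wlbN k s + ((k:ℝ)*t) * wlbN1 k s) := rfl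
  have hident : wlbpsider k s * ((s*(1-s)*(1+t)) * ((2*(k:ℝ)-1)*s))
      = wlbN k s * (k:ℝ)^2 * ((2*(k:ℝ)-1)*(s - t^2) - t*(1-s)) * s := by
    rw [hpd]
    linear_combination ((2*(k:ℝ)-1) * s^2 * (1+t)^2) * hode
      + ((2*(k:ℝ)-1) * s * ((1-s)*((1+t)+s*(wlbq k * x)-(k:ℝ)*t)
          - (1+t)*(1+(2*(k:ℝ)-1)*s))) * hc'
      + (-((k:ℝ) * wlbq k * wlbN k s * s * ((2*(k:ℝ)-1) * (1-s)))) * hx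
      + (-((k:ℝ) * t * wlbN k s * s * (1-s))) * hQ
  -- conclude
  have hNpos := wlbN_pos k hs0.le
  have hRneg : wlbN k s * (k:ℝ)^2 * ((2*(k:ℝ)-1)*(s - t^2) - t*(1-s)) * s < 0 := by
    apply mul_neg_of_neg_of_pos _ hs0
    apply mul_neg_of_pos_of_neg _ hG2
    positivity
  have hP2 : 0 < (s*(1-s)*(1+t)) * ((2*(k:ℝ)-1)*s) := by
    apply mul_pos (mul_pos (mul_pos hs0 (by linarith)) (by linarith)) (mul_pos hnr hs0)
  by_contra hcon
  push_neg at hcon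
  nlinarith [mul_nonneg hcon hP2.le]

lemma wlbq_pos (k : ℕ) (hk : 1 ≤ k) : 0 < wlbq k := by
  have : (1:ℝ) ≤ (k:ℝ) := by exact_mod_cast hk
  unfold wlbq
  exact div_pos (by linarith) (by linarith)

lemma wlbq_le_one (k : ℕ) (hk : 1 ≤ k) : wlbq k ≤ 1 := by
  have : (1:ℝ) ≤ (k:ℝ) := by exact_mod_cast hk
  unfold wlbq
  rw [div_le_one (by linarith)]
  linarith

lemma wlb_cont_N (k : ℕ) : Continuous (wlbN k) := by
  apply continuous_finset_sum
  intro j _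
  exact continuous_const.mul (continuous_pow j)

lemma wlb_cont_N1 (k : ℕ) : Continuous (wlbN1 k) := by
  apply continuous_finset_sum
  intro j _
  exact continuous_const.mul (continuous_const.mul (continuous_pow (j-1)))

lemma wlb_cont_psi (k : ℕ) (hk : 1 ≤ k) : Continuous (wlbpsi k) := by
  have hrp : Continuous (fun s : ℝ => s^(wlbq k)) :=
    continuous_iff_continuousAt.mpr fun x =>
      Real.continuousAt_rpow_const x _ (Or.inr (wlbq_pos k hk).le)
  unfold wlbpsi
  exact ((continuous_id.mul (continuous_const.add hrp)).mul (wlb_cont_N1 k)).sub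
    ((continuous_const.mul hrp).mul (wlb_cont_N k))

/-- ψ is negative near 0. -/
lemma wlbpsi_small (k : ℕ) (hk : 2 ≤ k) :
    ∃ s₀ : ℝ, 0 < s₀ ∧ s₀ < 1 ∧ ∀ s, 0 < s → s ≤ s₀ → wlbpsi k s < 0 := by
  have hk1 : 1 ≤ k := by omega
  have hkR : (2:ℝ) ≤ (k:ℝ) := by exact_mod_cast hk
  set K := wlbN1 k 1 with hK
  have hKpos : 0 < K := wlbN1_one_pos k hk1
  set e : ℝ := 1 - wlbq k with he
  have hepos : 0 < e := by
    have : wlbq k = (k:ℝ)/(2*(k:ℝ)-1) := rfl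
    rw [he, this]
    rw [sub_pos, div_lt_one (by linarith)]
    linarith
  set A : ℝ := (k:ℝ)/(4*K) with hA
  have hApos : 0 < A := by positivity
  refine ⟨min (A^(e⁻¹)) (1/2), by positivity, ?_, ?_⟩
  · calc min (A^(e⁻¹)) (1/2) ≤ 1/2 := min_le_right _ _
      _ < 1 := by norm_num
  intro s hs0 hs1
  have hsle : s ≤ 1 := le_trans hs1 (by calc min (A^(e⁻¹)) (1/2) ≤ 1/2 := min_le_right _ _
    _ ≤ 1 := by norm_num)
  set t : ℝ := s^(wlbq k) with ht
  have htpos : 0 < t := Real.rpow_pos_of_pos hs0 _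
  have ht1 : t ≤ 1 := Real.rpow_le_one hs0.le hsle (wlbq_pos k hk1).le
  -- s^e ≤ A
  have hse : s^e ≤ A := by
    calc s^e ≤ (A^(e⁻¹))^e := Real.rpow_le_rpow hs0.le
          (le_trans hs1 (min_le_left _ _)) hepos.le
      _ = A := Real.rpow_inv_rpow hApos.le hepos.ne'
  have hst : s^e * t = s := by
    rw [ht, ← Real.rpow_add hs0, he]
    norm_num
  -- bound the first part
  have hb1 : s*(1+t)*wlbN1 k s ≤ 2*(K*s) := by
    have h1 : wlbN1 k s ≤ K := wlbN1_le_one k hs0.le hsle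
    have h2 : 0 ≤ wlbN1 k s := wlbN1_nonneg k hs0.le
    have h3 : (1+t) * wlbN1 k s ≤ 2*K := mul_le_mul (by linarith) h1 h2 (by norm_num)
    have h4 := mul_le_mul_of_nonneg_left h3 hs0.le
    calc s*(1+t)*wlbN1 k s = s*((1+t)*wlbN1 k s) := by ring
      _ ≤ s*(2*K) := h4
      _ = 2*(K*s) := by ring
  -- bound the second part
  have hb2 : (k:ℝ)*t*1 ≤ (k:ℝ)*t*wlbN k s := by
    exact mul_le_mul_of_nonneg_left (wlbN_ge_one k hs0.le) (by positivity)
  -- key: 2*K*s < k*t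
  have hkey : 2*(K*s) < (k:ℝ)*t := by
    calc 2*(K*s) = 2*K*(s^e * t) := by rw [hst]; ring
      _ ≤ 2*K*(A*t) := by
          have : s^e * t ≤ A * t := mul_le_mul_of_nonneg_right hse htpos.le
          nlinarith [hKpos.le]
      _ = ((k:ℝ)/2) * t := by
          rw [hA]
          field_simp
          ring
      _ < (k:ℝ)*t := by nlinarith [htpos]
  have : wlbpsi k s = s*(1+t)*wlbN1 k s - (k:ℝ)*t*wlbN k s := rfl
  rw [this]
  nlinarith [hb1, hb2, hkey]

/-- ψ < 0 on (0,1). -/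
lemma wlbpsi_neg (k : ℕ) (hk : 2 ≤ k) {s₁ : ℝ} (h0 : 0 < s₁) (h1 : s₁ < 1) :
    wlbpsi k s₁ < 0 := by
  have hk1 : 1 ≤ k := by omega
  obtain ⟨s₀, hs₀pos, hs₀lt, hsmall⟩ := wlbpsi_small k hk
  by_contra hcon
  push_neg at hcon
  have hs₀s₁ : s₀ < s₁ := by
    by_contra hle
    push_neg at hle
    exact absurd (hsmall s₁ h0 hle) (not_lt.mpr hcon)
  set S : Set ℝ := Icc s₀ s₁ ∩ {s | 0 ≤ wlbpsi k s} with hS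
  have hcont := wlb_cont_psi k hk1
  have hclosed : IsClosed S := isClosed_Icc.inter (isClosed_le continuous_const hcont)
  have hne : S.Nonempty := ⟨s₁, ⟨hs₀s₁.le, le_refl _⟩, hcon⟩
  have hbdd : BddBelow S := ⟨s₀, fun x hx => hx.1.1⟩
  set c := sInf S with hc
  have hcS : c ∈ S := hclosed.csInf_mem hne hbdd
  have hcIcc : c ∈ Icc s₀ s₁ := hcS.1
  have hcpsi : 0 ≤ wlbpsi k c := hcS.2
  have hcpos : 0 < c := lt_of_lt_of_le hs₀pos hcIcc.1
  have hclt1 : c < 1 := lt_of_le_of_lt hcIcc.2 h1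
  have hcgt : s₀ < c := by
    rcases lt_or_eq_of_le hcIcc.1 with h | h
    · exact h
    · exact absurd (hsmall c hcpos (le_of_eq h.symm)) (not_lt.mpr hcpsi)
  have hleft : ∀ x, s₀ < x → x < c → wlbpsi k x < 0 := by
    intro x hx0 hxc
    by_contra hx
    push_neg at hx
    have hxS : x ∈ S := ⟨⟨hx0.le, le_trans hxc.le hcIcc.2⟩, hx⟩
    exact absurd (csInf_le hbdd hxS) (not_le.mpr hxc)
  -- ψ(c) ≤ 0 by left continuity
  have hczero : wlbpsi k c = 0 := by
    refine le_antisymm ?_ hcpsi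
    have htend : Tendsto (wlbpsi k) (nhdsWithin c (Iio c)) (nhds (wlbpsi k c)) :=
      (hcont.tendsto c).mono_left nhdsWithin_le_nhds
    have hev : ∀ᶠ x in nhdsWithin c (Iio c), wlbpsi k x ≤ 0 := by
      filter_upwards [Ioo_mem_nhdsLT_of_mem (⟨hcgt, le_refl c⟩ : c ∈ Ioc s₀ c)]
        with x hx
      exact (hleft x hx.1 hx.2).le
    exact le_of_tendsto htend hev
  -- derivative at c is negative
  have hD := wlb_cross k hk hcpos hclt1 hczero
  -- but slope from the left is nonnegative
  have hder := hasDerivAt_wlbpsi k hcpos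
  rw [hasDerivAt_iff_tendsto_slope] at hder
  have hder' : Tendsto (slope (wlbpsi k) c) (nhdsWithin c (Iio c)) (nhds (wlbpsider k c)) :=
    hder.mono_left (nhdsWithin_mono _ (fun x hx => ne_of_lt hx))
  have hev : ∀ᶠ x in nhdsWithin c (Iio c), 0 ≤ slope (wlbpsi k) c x := by
    filter_upwards [Ioo_mem_nhdsLT_of_mem (⟨hcgt, le_refl c⟩ : c ∈ Ioc s₀ c)]
      with x hx
    rw [slope_def_field, hczero, sub_zero]
    exact div_nonneg_iff.mpr (Or.inr ⟨(hleft x hx.1 hx.2).le, by linarith [hx.2]⟩)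
  exact absurd (ge_of_tendsto hder' hev) (not_le.mpr hD)

/-- Vandermonde. -/
lemma wlbN_one (k : ℕ) : wlbN k 1 = ((2*k).choose k : ℝ) := by
  have hnat : ∑ j ∈ range (k+1), k.choose j * k.choose j = (2*k).choose k := by
    rw [two_mul, Nat.add_choose_eq, Finset.Nat.sum_antidiagonal_eq_sum_range_succ_mk]
    exact Finset.sum_congr rfl fun j hj => by
      rw [Nat.choose_symm (Nat.lt_succ_iff.mp (Finset.mem_range.mp hj))]
  unfold wlbN
  rw [← hnat]
  push_cast
  exact Finset.sum_congr rfl fun j _ => by rw [one_pow]; ring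

/-- central binomial coefficient bound -/
lemma wlb_central (k : ℕ) (hk : 1 ≤ k) : ((2*k).choose k) ≤ 2^(2*k-1) := by
  have h1 : (2*k).choose k = (2*k-1).choose (k-1) + (2*k-1).choose k := by
    obtain ⟨m, rfl⟩ : ∃ m, k = m+1 := ⟨k-1, by omega⟩
    rw [show 2*(m+1) = (2*m+1)+1 by omega]
    simp only [Nat.add_sub_cancel]
    exact Nat.choose_succ_succ _ _
  have h2 : (2*k-1).choose (k-1) + (2*k-1).choose k ≤ ∑ j ∈ range ((2*k-1)+1), (2*k-1).choose j := by
    have hpair : ({k-1, k} : Finset ℕ).sum ((2*k-1).choose) = (2*k-1).choose (k-1) + (2*k-1).choose k :=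
      Finset.sum_pair (by omega)
    rw [← hpair]
    apply Finset.sum_le_sum_of_subset
    intro x hx
    simp only [Finset.mem_insert, Finset.mem_singleton] at hx
    simp only [Finset.mem_range]
    omega
  rw [h1]
  calc _ ≤ ∑ j ∈ range ((2*k-1)+1), (2*k-1).choose j := h2
    _ = 2^(2*k-1) := Nat.sum_range_choose (2*k-1)

noncomputable def wlbTheta (k : ℕ) (s : ℝ) : ℝ :=
  Real.log (wlbN k s) - (2*(k:ℝ)-1) * Real.log (1+s^(wlbq k))

lemma wlb_theta_deriv (k : ℕ) (hk : 1 ≤ k) {s : ℝ} (hs : 0 < s) :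
    HasDerivAt (wlbTheta k)
      (wlbN1 k s / wlbN k s
        - (2*(k:ℝ)-1) * ((wlbq k * s^(wlbq k - 1)) / (1+s^(wlbq k)))) s := by
  have hrp : HasDerivAt (fun x : ℝ => x^(wlbq k)) (wlbq k * s^(wlbq k - 1)) s :=
    Real.hasDerivAt_rpow_const (Or.inl hs.ne')
  have htpos : (0:ℝ) < 1 + s^(wlbq k) := by
    have := Real.rpow_pos_of_pos hs (wlbq k)
    linarith
  have h1 : HasDerivAt (fun x => Real.log (wlbN k x)) (wlbN1 k s / wlbN k s) s :=
    (hasDerivAt_wlbN k s).log (wlbN_pos k hs.le).ne'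
  have h2 : HasDerivAt (fun x : ℝ => Real.log (1+x^(wlbq k)))
      ((wlbq k * s^(wlbq k - 1)) / (1+s^(wlbq k))) s :=
    (hrp.const_add 1).log htpos.ne'
  exact h1.sub (h2.const_mul _)

lemma wlb_theta_deriv_neg (k : ℕ) (hk : 2 ≤ k) {s : ℝ} (hs0 : 0 < s) (hs1 : s < 1) :
    wlbN1 k s / wlbN k s
      - (2*(k:ℝ)-1) * ((wlbq k * s^(wlbq k - 1)) / (1+s^(wlbq k))) < 0 := by
  have hk1 : 1 ≤ k := by omega
  have hkR : (2:ℝ) ≤ (k:ℝ) := by exact_mod_cast hk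
  set t : ℝ := s^(wlbq k) with ht
  set x : ℝ := s^(wlbq k - 1) with hxdef
  have htpos : 0 < t := Real.rpow_pos_of_pos hs0 _
  have hx : x * s = t := by
    rw [hxdef, ht]
    have h := (Real.rpow_add hs0 (wlbq k - 1) 1).symm
    rw [Real.rpow_one] at h
    rw [h]
    norm_num
  have hxpos : 0 < x := Real.rpow_pos_of_pos hs0 _
  have hQ : (2*(k:ℝ)-1) * wlbq k = (k:ℝ) := by
    have : wlbq k = (k:ℝ)/(2*(k:ℝ)-1) := rfl
    rw [this, mul_comm, div_mul_cancel₀ _ (by linarith : (2*(k:ℝ)-1) ≠ 0)]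
  have hNpos := wlbN_pos k hs0.le
  have hpsi := wlbpsi_neg k hk hs0 hs1
  have hpsieq : wlbpsi k s = s*(1+t)*wlbN1 k s - (k:ℝ)*t*wlbN k s := rfl
  rw [hpsieq] at hpsi
  -- rewrite the second term
  have hR : (2*(k:ℝ)-1) * ((wlbq k * x) / (1+t)) = (k:ℝ)*t/(s*(1+t)) := by
    rw [← mul_div_assoc, div_eq_div_iff (by linarith) (by positivity)]
    linear_combination ((2*(k:ℝ)-1) * wlbq k * (1+t)) * hx + ((1+t)*t) * hQ
  rw [hR, sub_neg]
  rw [div_lt_div_iff₀ hNpos (by positivity)]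
  nlinarith [hpsi]

/-- Main inequality: for s ∈ [0,1],  C(2k,k) ((1+s^q)/2)^(2k-1) ≤ N(s). -/
lemma wlb_main (k : ℕ) (hk : 1 ≤ k) {s : ℝ} (hs0 : 0 ≤ s) (hs1 : s ≤ 1) :
    ((2*k).choose k : ℝ) * ((1+s^(wlbq k))/2)^(2*k-1) ≤ wlbN k s := by
  rcases eq_or_lt_of_le hk with hk1 | hk2
  · -- k = 1 : equality
    have hkeq : k = 1 := hk1.symm
    subst hkeq
    have hq1 : wlbq 1 = 1 := by
      unfold wlbq; norm_num
    rw [hq1, Real.rpow_one]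
    have hN : wlbN 1 s = 1 + s := by
      unfold wlbN
      rw [Finset.sum_range_succ, Finset.sum_range_one]
      norm_num
    rw [hN, show (2*1-1) = 1 by norm_num, pow_one, Nat.choose_one_right]
    push_cast
    linarith
  -- now k ≥ 2
  have hk' : 2 ≤ k := hk2
  have hkR : (2:ℝ) ≤ (k:ℝ) := by exact_mod_cast hk'
  rcases eq_or_lt_of_le hs0 with hz | hspos
  · -- s = 0
    have hzeq : s = 0 := hz.symm
    subst hzeq
    have hq := wlbq_pos k hk
    have hN : wlbN k 0 = 1 := by
      unfold wlbN
      rw [Finset.sum_eq_single 0]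
      · norm_num
      · intro b _ hb
        rcases Nat.exists_eq_succ_of_ne_zero hb with ⟨m, rfl⟩
        simp [pow_succ]
      · intro h; simp at h
    rw [hN, Real.zero_rpow hq.ne']
    have hcb : ((2*k).choose k : ℝ) ≤ 2^(2*k-1) := by
      exact_mod_cast wlb_central k hk
    have h2 : ((1:ℝ)+0)/2 = 1/2 := by norm_num
    rw [h2, div_pow, one_pow, mul_one_div, div_le_one (by positivity)]
    exact hcb
  rcases eq_or_lt_of_le hs1 with h1 | hslt
  · -- s = 1
    subst h1
    rw [wlbN_one, Real.one_rpow]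
    norm_num
  -- 0 < s < 1 : use the monotonicity of theta
  have hanti : StrictAntiOn (wlbTheta k) (Ioc (0:ℝ) 1) := by
    apply strictAntiOn_of_deriv_neg (convex_Ioc 0 1)
    · intro x hx
      exact ((wlb_theta_deriv k hk hx.1).continuousAt).continuousWithinAt
    · intro x hx
      rw [interior_Ioc] at hx
      rw [(wlb_theta_deriv k hk hx.1).deriv]
      exact wlb_theta_deriv_neg k hk' hx.1 hx.2
  have hth : wlbTheta k 1 < wlbTheta k s :=
    hanti ⟨hspos, hslt.le⟩ ⟨one_pos, le_refl 1⟩ hslt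
  -- unpack
  have htpos : (0:ℝ) < 1 + s^(wlbq k) := by
    have := Real.rpow_pos_of_pos hspos (wlbq k)
    linarith
  have hC : (0:ℝ) < ((2*k).choose k : ℝ) := by
    have := Nat.choose_pos (show k ≤ 2*k by omega)
    exact_mod_cast this
  have hNpos := wlbN_pos k hs0
  have hcast : ((2*k-1 : ℕ) : ℝ) = 2*(k:ℝ)-1 := by
    push_cast [Nat.cast_sub (by omega : 1 ≤ 2*k)]; ring
  have hlog : Real.log (((2*k).choose k : ℝ) * ((1+s^(wlbq k))/2)^(2*k-1))
      < Real.log (wlbN k s) := by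
    rw [Real.log_mul hC.ne' (by positivity), Real.log_pow,
        Real.log_div htpos.ne' (by norm_num), hcast]
    have hth1 : wlbTheta k 1 = Real.log ((2*k).choose k : ℝ) - (2*(k:ℝ)-1) * Real.log 2 := by
      unfold wlbTheta
      rw [wlbN_one, Real.one_rpow]
      norm_num
    have hths : wlbTheta k s = Real.log (wlbN k s) - (2*(k:ℝ)-1) * Real.log (1+s^(wlbq k)) := rfl
    rw [hth1, hths] at hth
    linarith
  have := (Real.log_lt_log_iff (by positivity) hNpos).mp hlog
  linarith

lemma wlb_sym (k : ℕ) (x y : ℝ) :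
    ∑ j ∈ range (k+1), (k.choose j : ℝ)^2 * x^(k-j) * y^j
      = ∑ j ∈ range (k+1), (k.choose j : ℝ)^2 * y^(k-j) * x^j := by
  rw [← Finset.sum_range_reflect (fun j => (k.choose j : ℝ)^2 * y^(k-j) * x^j) (k+1)]
  apply Finset.sum_congr rfl
  intro j hj
  have hjk : j ≤ k := Nat.lt_succ_iff.mp (Finset.mem_range.mp hj)
  rw [show k+1-1-j = k-j by omega, Nat.choose_symm hjk, show k-(k-j) = j by omega]
  ring

lemma wlb_cast_n (k : ℕ) (hk : 1 ≤ k) : ((2*k-1 : ℕ) : ℝ) = 2*(k:ℝ)-1 := by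
  push_cast [Nat.cast_sub (by omega : 1 ≤ 2*k)]; ring

lemma wlb_master_aux (k : ℕ) (hk : 1 ≤ k) {x y : ℝ} (hy : 0 ≤ y) (hyx : y ≤ x) :
    ((2*k).choose k : ℝ) * ((x^(wlbq k) + y^(wlbq k))/2)^(2*k-1)
      ≤ ∑ j ∈ range (k+1), (k.choose j : ℝ)^2 * x^(k-j) * y^j := by
  have hx : 0 ≤ x := le_trans hy hyx
  have hkR : (1:ℝ) ≤ (k:ℝ) := by exact_mod_cast hk
  rcases eq_or_lt_of_le hx with hx0 | hxpos
  · -- x = 0, hence y = 0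
    have hxe : x = 0 := hx0.symm
    have hye : y = 0 := le_antisymm (hxe ▸ hyx) hy
    subst hxe; subst hye
    have hq := wlbq_pos k hk
    rw [Real.zero_rpow hq.ne']
    have hsum : ∑ j ∈ range (k+1), (k.choose j : ℝ)^2 * (0:ℝ)^(k-j) * (0:ℝ)^j = 0 := by
      apply Finset.sum_eq_zero
      intro j hj
      have hjk : j ≤ k := Nat.lt_succ_iff.mp (Finset.mem_range.mp hj)
      rcases Nat.eq_zero_or_pos j with h | h
      · subst h
        rw [show k - 0 = k by omega]
        rw [zero_pow (by omega : k ≠ 0)]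
        ring
      · rw [zero_pow (by omega : j ≠ 0)]
        ring
    rw [hsum]
    have : ((0:ℝ)+0)/2 = 0 := by norm_num
    rw [this, zero_pow (by omega : 2*k-1 ≠ 0)]
    norm_num
  · -- x > 0
    set s : ℝ := y / x with hs
    have hs0 : 0 ≤ s := div_nonneg hy hxpos.le
    have hs1 : s ≤ 1 := (div_le_one hxpos).mpr hyx
    have hysx : y = s * x := by
      rw [hs]; field_simp
    have key1 : ∑ j ∈ range (k+1), (k.choose j : ℝ)^2 * x^(k-j) * y^j
        = x^k * wlbN k s := by
      unfold wlbN
      rw [Finset.mul_sum]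
      apply Finset.sum_congr rfl
      intro j hj
      have hjk : j ≤ k := Nat.lt_succ_iff.mp (Finset.mem_range.mp hj)
      have hxj : x^(k-j) = x^k / x^j := pow_sub₀ x hxpos.ne' hjk
      rw [hxj, hs, div_pow]
      ring
    have hq := wlbq_pos k hk
    have key2 : ((x^(wlbq k) + y^(wlbq k))/2)^(2*k-1)
        = x^k * ((1+s^(wlbq k))/2)^(2*k-1) := by
      have hyq : y^(wlbq k) = s^(wlbq k) * x^(wlbq k) := by
        rw [hysx, Real.mul_rpow hs0 hxpos.le]
      have hxqn : (x^(wlbq k))^(2*k-1) = x^k := by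
        rw [← Real.rpow_natCast (x^(wlbq k)) (2*k-1), ← Real.rpow_mul hxpos.le,
            wlb_cast_n k hk]
        have : wlbq k * (2*(k:ℝ)-1) = (k:ℝ) := by
          unfold wlbq
          rw [div_mul_cancel₀ _ (by linarith : 2*(k:ℝ)-1 ≠ 0)]
        rw [this, Real.rpow_natCast]
      calc ((x^(wlbq k) + y^(wlbq k))/2)^(2*k-1)
          = ((x^(wlbq k))*((1+s^(wlbq k))/2))^(2*k-1) := by rw [hyq]; ring_nf
        _ = (x^(wlbq k))^(2*k-1) * ((1+s^(wlbq k))/2)^(2*k-1) := mul_pow _ _ _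
        _ = x^k * ((1+s^(wlbq k))/2)^(2*k-1) := by rw [hxqn]
    rw [key1, key2, ← mul_assoc, mul_comm (((2*k).choose k : ℝ)) (x^k), mul_assoc]
    exact mul_le_mul_of_nonneg_left (wlb_main k hk hs0 hs1) (pow_nonneg hxpos.le k)

lemma wlb_master (k : ℕ) (hk : 1 ≤ k) {x y : ℝ} (hx : 0 ≤ x) (hy : 0 ≤ y) :
    ((2*k).choose k : ℝ) * ((x^(wlbq k) + y^(wlbq k))/2)^(2*k-1)
      ≤ ∑ j ∈ range (k+1), (k.choose j : ℝ)^2 * x^(k-j) * y^j := by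
  rcases le_total y x with h | h
  · exact wlb_master_aux k hk hy h
  · rw [wlb_sym, add_comm (x^(wlbq k))]
    exact wlb_master_aux k hk hx h

/-- For every positive integer `k` and `a, b ≥ 0`,
`∑_{j=0}^{k} C(k,j)² a^{(2k−1)(k−j)/k} b^{(2k−1)j/k} ≥ C(2k,k) 2^{1−2k} (a+b)^{2k−1}`;
equivalently, the Whiteley mean `𝔐₂^{[k,k]}(x,y)` dominates the power mean with
exponent `k/(2k−1)` for all `x, y ≥ 0`. -/
theorem whiteley_mean_lower_bound (k : ℕ) (hk : 0 < k) :
    (∀ a b : ℝ, 0 ≤ a → 0 ≤ b →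
      ∑ j ∈ Finset.range (k + 1),
          (Nat.choose k j : ℝ) ^ 2 *
            a ^ ((2 * (k : ℝ) - 1) * ((k : ℝ) - j) / k) *
            b ^ ((2 * (k : ℝ) - 1) * (j : ℝ) / k)
        ≥ (Nat.choose (2 * k) k : ℝ) * (2 : ℝ) ^ (1 - 2 * (k : ℝ)) *
            (a + b) ^ (2 * (k : ℝ) - 1)) ∧
    (∀ x y : ℝ, 0 ≤ x → 0 ≤ y →
      ((∑ j ∈ Finset.range (k + 1),
          (Nat.choose k j : ℝ) ^ 2 * x ^ (k - j) * y ^ j) / (Nat.choose (2 * k) k : ℝ))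
          ^ (1 / (k : ℝ))
        ≥ ((x ^ ((k : ℝ) / (2 * (k : ℝ) - 1)) + y ^ ((k : ℝ) / (2 * (k : ℝ) - 1))) / 2)
            ^ ((2 * (k : ℝ) - 1) / k)) := by
  have hk1 : 1 ≤ k := hk
  have hkR : (1:ℝ) ≤ (k:ℝ) := by exact_mod_cast hk1
  have hq : wlbq k = (k:ℝ)/(2*(k:ℝ)-1) := rfl
  have hC : (0:ℝ) < ((2*k).choose k : ℝ) := by
    have := Nat.choose_pos (show k ≤ 2*k by omega)
    exact_mod_cast this
  constructor
  · -- first statement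
    intro a b ha hb
    set x : ℝ := a^((2*(k:ℝ)-1)/(k:ℝ)) with hxdef
    set y : ℝ := b^((2*(k:ℝ)-1)/(k:ℝ)) with hydef
    have hx : 0 ≤ x := Real.rpow_nonneg ha _
    have hy : 0 ≤ y := Real.rpow_nonneg hb _
    have hM := wlb_master k hk1 hx hy
    -- identify the sums
    have hsum_eq : ∑ j ∈ Finset.range (k + 1),
        (Nat.choose k j : ℝ) ^ 2 * a ^ ((2 * (k : ℝ) - 1) * ((k : ℝ) - j) / k) *
          b ^ ((2 * (k : ℝ) - 1) * (j : ℝ) / k)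
        = ∑ j ∈ range (k+1), (k.choose j : ℝ)^2 * x^(k-j) * y^j := by
      apply Finset.sum_congr rfl
      intro j hj
      have hjk : j ≤ k := Nat.lt_succ_iff.mp (Finset.mem_range.mp hj)
      have hxe : x^(k-j) = a ^ ((2 * (k : ℝ) - 1) * ((k : ℝ) - j) / k) := by
        rw [hxdef, ← Real.rpow_natCast (a^((2*(k:ℝ)-1)/(k:ℝ))) (k-j),
            ← Real.rpow_mul ha]
        congr 1
        rw [Nat.cast_sub hjk]
        field_simp
      have hye : y^j = b ^ ((2 * (k : ℝ) - 1) * (j : ℝ) / k) := by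
        rw [hydef, ← Real.rpow_natCast (b^((2*(k:ℝ)-1)/(k:ℝ))) j, ← Real.rpow_mul hb]
        congr 1
        field_simp
      rw [hxe, hye]
    -- identify x^q = a, y^q = b
    have hxq : x^(wlbq k) = a := by
      rw [hxdef, hq, ← Real.rpow_mul ha]
      have : (2*(k:ℝ)-1)/(k:ℝ) * ((k:ℝ)/(2*(k:ℝ)-1)) = 1 := by
        field_simp
        exact div_self (by linarith : (2*(k:ℝ)-1) ≠ 0)
      rw [this, Real.rpow_one]
    have hyq : y^(wlbq k) = b := by
      rw [hydef, hq, ← Real.rpow_mul hb]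
      have : (2*(k:ℝ)-1)/(k:ℝ) * ((k:ℝ)/(2*(k:ℝ)-1)) = 1 := by
        field_simp
        exact div_self (by linarith : (2*(k:ℝ)-1) ≠ 0)
      rw [this, Real.rpow_one]
    rw [hxq, hyq] at hM
    -- identify the right-hand side
    have hab : 0 ≤ a + b := by linarith
    have hrhs : (Nat.choose (2 * k) k : ℝ) * (2 : ℝ) ^ (1 - 2 * (k : ℝ)) *
        (a + b) ^ (2 * (k : ℝ) - 1)
        = ((2*k).choose k : ℝ) * ((a+b)/2)^(2*k-1) := by
      rw [show (1 - 2*(k:ℝ)) = -(2*(k:ℝ)-1) by ring, Real.rpow_neg (by norm_num : (0:ℝ) ≤ 2),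
          ← wlb_cast_n k hk1, Real.rpow_natCast, Real.rpow_natCast, div_pow]
      ring
    rw [ge_iff_le, hsum_eq, hrhs]
    exact hM
  · -- second statement
    intro x y hx hy
    have hM := wlb_master k hk1 hx hy
    rw [hq] at hM
    set S : ℝ := ∑ j ∈ range (k+1), (k.choose j : ℝ)^2 * x^(k-j) * y^j with hS
    set B : ℝ := (x ^ ((k : ℝ) / (2 * (k : ℝ) - 1)) + y ^ ((k : ℝ) / (2 * (k : ℝ) - 1))) / 2
      with hB
    have hBnn : 0 ≤ B := by
      rw [hB]
      have := Real.rpow_nonneg hx ((k : ℝ) / (2 * (k : ℝ) - 1))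
      have := Real.rpow_nonneg hy ((k : ℝ) / (2 * (k : ℝ) - 1))
      positivity
    have hdiv : B^(2*k-1) ≤ S / ((2*k).choose k : ℝ) := by
      rw [le_div_iff₀ hC]
      calc B^(2*k-1) * ((2*k).choose k : ℝ)
          = ((2*k).choose k : ℝ) * B^(2*k-1) := by ring
        _ ≤ S := hM
    have hmono := Real.rpow_le_rpow (by positivity) hdiv
      (by positivity : (0:ℝ) ≤ 1/(k:ℝ))
    rw [ge_iff_le]
    calc B ^ ((2 * (k : ℝ) - 1) / (k:ℝ))
        = (B^(2*k-1 : ℕ)) ^ (1/(k:ℝ)) := by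
          rw [← Real.rpow_natCast B (2*k-1), ← Real.rpow_mul hBnn, wlb_cast_n k hk1]
          congr 1
          field_simp
      _ ≤ (S / ((2*k).choose k : ℝ)) ^ (1/(k:ℝ)) := hmono
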